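/- Let m, d > 0, λ_k, λ_l > 0, and define A_j = [[0, 1], [−λ_j/m, −d/m]] for j ∈ {k, l}, B = [0; −1/m]. Then the unique solution Q of the Sylvester equation A_k Q + Q A_l^T + B B^T = 0 is Q = c · [[1, (λ_k − λ_l)/(2d)], [(λ_l − λ_k)/(2d), (λ_k + λ_l)/(2m)]] where c = 2d/(m(λ_k − λ_l)^2 + 2(λ_k + λ_l)d^2). -/

import Mathlib

open Matrix

set_option maxHeartbeats 1000000 in
/-- The unique solution of the Sylvester equation `A_k Q + Q A_lᵀ + B Bᵀ = 0` for the
closed-loop swing dynamics in controllable canonical form. -/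
theorem stmt16 (m d lk ll : ℝ) (hm : 0 < m) (hd : 0 < d) (hlk : 0 < lk) (hll : 0 < ll) :
    let Ak : Matrix (Fin 2) (Fin 2) ℝ := !![0, 1; -lk / m, -d / m]
    let Al : Matrix (Fin 2) (Fin 2) ℝ := !![0, 1; -ll / m, -d / m]
    let B : Matrix (Fin 2) (Fin 1) ℝ := !![0; -(1 / m)]
    let c : ℝ := 2 * d / (m * (lk - ll) ^ 2 + 2 * (lk + ll) * d ^ 2)
    ∀ Q : Matrix (Fin 2) (Fin 2) ℝ,
      Ak * Q + Q * Alᵀ + B * Bᵀ = 0 ↔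
        Q = c • !![1, (lk - ll) / (2 * d); (ll - lk) / (2 * d), (lk + ll) / (2 * m)] := by
  intro Ak Al B c Q
  have hm' : m ≠ 0 := ne_of_gt hm
  have hd' : d ≠ 0 := ne_of_gt hd
  have hden' : m * (lk - ll) ^ 2 + 2 * (lk + ll) * d ^ 2 ≠ 0 := by positivity
  have hT : Alᵀ = !![0, -ll / m; 1, -d / m] := by
    ext i j; fin_cases i <;> fin_cases j <;> rfl
  have hBT : Bᵀ = !![0, -(1 / m)] := by
    ext i j; fin_cases i <;> fin_cases j <;> rfl
  have hB : B * Bᵀ = !![0, 0; 0, 1 / m ^ 2] := by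
    rw [hBT]
    ext i j
    fin_cases i <;> fin_cases j <;>
      simp [B, Matrix.mul_apply, Fin.sum_univ_one] <;> ring
  obtain ⟨a, b, cc, e, rfl⟩ : ∃ a b cc e, Q = !![a, b; cc, e] :=
    ⟨_, _, _, _, by ext i j; fin_cases i <;> fin_cases j <;> rfl⟩
  rw [hT, hB]
  constructor
  · intro h
    have e00 := congrFun (congrFun h 0) 0
    have e01 := congrFun (congrFun h 0) 1
    have e10 := congrFun (congrFun h 1) 0
    have e11 := congrFun (congrFun h 1) 1
    simp [Ak, Matrix.mul_apply, Fin.sum_univ_two] at e00 e01 e10 e11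
    field_simp at e01 e10 e11
    have E2 : m * e - ll * a - d * b = 0 := by
      have h2 : m * (m * e - ll * a - d * b) = 0 := by linear_combination m * e01
      exact (mul_eq_zero.mp h2).resolve_left hm'
    have E3 : -(lk * a) - d * cc + m * e = 0 := by
      have h3 : m * (-(lk * a) - d * cc + m * e) = 0 := by linear_combination m * e10
      exact (mul_eq_zero.mp h3).resolve_left hm'
    have E4 : 1 - lk * m * b - ll * m * cc - 2 * d * m * e = 0 := by
      have h4 : m ^ 2 * (1 - lk * m * b - ll * m * cc - 2 * d * m * e) = 0 := by
        linear_combination m ^ 2 * e11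
      exact (mul_eq_zero.mp h4).resolve_left (pow_ne_zero _ hm')
    ext i j
    fin_cases i <;> fin_cases j <;> simp [c, Matrix.smul_apply]
    · rw [eq_div_iff hden']
      linear_combination (-(d * (2 * d ^ 2 + m * (lk + ll)))) * e00 +
        (m * (lk - ll) - 2 * d ^ 2) * E2 + (-(m * (lk - ll)) - 2 * d ^ 2) * E3 +
        (-2 * d) * E4
    · rw [div_mul_div_comm, eq_div_iff (by positivity)]
      linear_combination (4 * d ^ 3 * ll - 2 * d * m * ll * (lk - ll)) * e00 +
        (-4 * d ^ 2 * lk) * E2 + (4 * d ^ 2 * ll) * E3 + (-2 * d * (lk - ll)) * E4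
    · rw [div_mul_div_comm, eq_div_iff (by positivity)]
      linear_combination (4 * d ^ 3 * lk + 2 * d * m * lk * (lk - ll)) * e00 +
        (4 * d ^ 2 * lk) * E2 + (-4 * d ^ 2 * ll) * E3 + (2 * d * (lk - ll)) * E4
    · rw [div_mul_div_comm, eq_div_iff (by positivity)]
      linear_combination (-4 * d * m * lk * ll) * e00 +
        (2 * m * lk * (lk - ll)) * E2 + (-2 * m * ll * (lk - ll)) * E3 +
        (-2 * d * (lk + ll)) * E4
  · intro hQ
    rw [hQ]
    ext i j
    fin_cases i <;> fin_cases j <;>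
      simp [Ak, c, Matrix.mul_apply, Fin.sum_univ_two, Matrix.smul_apply] <;>
      field_simp <;> ring
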